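/- Let k ∈ ℕ, n = 2k + 1, let f : {0,1}^n → {0,1} be the majority function defined by f(x) = 1 if Σ_{i=1}^n x_i ≥ k + 1 and f(x) = 0 otherwise, and let D be the uniform distribution on {0,1}^n. Then there exists δ ∈ [0,1] such that the subset-minimal global δ-sufficient reasons for f are exactly the subsets S ⊆ {1,…,n} with |S| = k + 1; in particular, the number of subset-minimal global δ-sufficient reasons equals the binomial coefficient C(2k+1, k+1), which grows as Θ(2^n / √n). -/

import Mathlib

open Finset

open Classical in
/-- Conditional probability `Pr(A | B) = Pr(A ∩ B) / Pr(B)` over a finite space,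
with mass function `P`. -/
noncomputable def condPr {F : Type*} [Fintype F] (P : F → ℝ) (A B : F → Prop) : ℝ :=
  (∑ z, if A z ∧ B z then P z else 0) / (∑ z, if B z then P z else 0)

open Classical in
/-- The global sufficient value function on `{0,1}^n`:
`v^g_suff(S) = Σ_{x : P x > 0} P x · Pr_{z∼D}(f z = f x | z_S = x_S)`. -/
noncomputable def vgSuff {n : ℕ} (f : (Fin n → Bool) → Bool)
    (P : (Fin n → Bool) → ℝ) (S : Finset (Fin n)) : ℝ :=
  ∑ x ∈ Finset.univ.filter (fun x => 0 < P x),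
    P x * condPr P (fun z => f z = f x) (fun z => ∀ i ∈ S, z i = x i)

/-- `S` is a subset-minimal global `δ`-sufficient reason:
`v^g_suff(S) ≥ δ` and `v^g_suff(S') < δ` for every proper subset `S' ⊊ S`. -/
def SubsetMinimalSufficient {n : ℕ} (f : (Fin n → Bool) → Bool)
    (P : (Fin n → Bool) → ℝ) (δ : ℝ) (S : Finset (Fin n)) : Prop :=
  δ ≤ vgSuff f P S ∧ ∀ S' : Finset (Fin n), S' ⊂ S → vgSuff f P S' < δ

namespace MajAux


variable {n : ℕ}

def cnt (x : Fin n → Bool) : ℕ := (univ.filter fun i => x i = true).card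

def co (x : Fin n → Bool) (j : Fin n) : ℕ := ((univ.erase j).filter fun i => x i = true).card

lemma cnt_split (x : Fin n → Bool) (j : Fin n) : cnt x = co x j + (x j).toNat := by
  classical
  unfold cnt co
  rcases hb : x j with _ | _
  · rw [Bool.toNat_false, add_zero]
    congr 1
    ext i
    simp only [mem_filter, mem_univ, mem_erase, true_and]
    constructor
    · intro h
      refine ⟨⟨?_, trivial⟩, h⟩
      rintro rfl; rw [hb] at h; exact Bool.false_ne_true h
    · rintro ⟨_, h⟩; exact h
  · rw [Bool.toNat_true]
    have : (univ.filter fun i => x i = true) = insert j ((univ.erase j).filter fun i => x i = true) := by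
      ext i
      simp only [mem_filter, mem_univ, mem_insert, mem_erase, true_and]
      constructor
      · intro h
        by_cases hij : i = j
        · exact Or.inl hij
        · exact Or.inr ⟨⟨hij, trivial⟩, h⟩
      · rintro (rfl | ⟨_, h⟩)
        · exact hb
        · exact h
    rw [this, card_insert_of_notMem (by simp)]

lemma co_update (x : Fin n → Bool) (j : Fin n) (b : Bool) :
    co (Function.update x j b) j = co x j := by
  unfold co
  congr 1
  apply filter_congr
  intro i hi
  rw [mem_erase] at hi
  rw [Function.update_of_ne hi.1]

lemma cnt_update (x : Fin n → Bool) (j : Fin n) (b : Bool) :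
    cnt (Function.update x j b) = co x j + b.toNat := by
  rw [cnt_split _ j, co_update, Function.update_self]

/-- pivotality of coordinate `j` -/
def piv (f : (Fin n → Bool) → Bool) (j : Fin n) (z : Fin n → Bool) : Prop :=
  f (Function.update z j true) ≠ f (Function.update z j false)

lemma piv_update (f : (Fin n → Bool) → Bool) (j : Fin n) (z : Fin n → Bool) (b : Bool) :
    piv f j (Function.update z j b) ↔ piv f j z := by
  unfold piv
  rw [Function.update_idem, Function.update_idem]

lemma piv_of (f : (Fin n → Bool) → Bool) (j : Fin n) (z : Fin n → Bool) (a b : Bool)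
    (hab : a ≠ b) (h : f (Function.update z j a) ≠ f (Function.update z j b)) :
    piv f j z := by
  cases a <;> cases b
  · exact absurd rfl hab
  · exact fun hh => h hh.symm
  · exact h
  · exact absurd rfl hab

lemma notpiv_of (f : (Fin n → Bool) → Bool) (j : Fin n) (z : Fin n → Bool) (a b : Bool)
    (hab : a ≠ b) (h : f (Function.update z j a) = f (Function.update z j b)) (c : Bool) :
    f (Function.update z j c) = f z := by
  have key : ∀ c : Bool, f (Function.update z j c) = f (Function.update z j a) := by
    intro c; cases c <;> cases a <;> cases b <;> simp_all
  calc f (Function.update z j c) = f (Function.update z j a) := key c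
    _ = f (Function.update z j (z j)) := (key (z j)).symm
    _ = f z := by rw [Function.update_eq_self]

section Maj

variable {k : ℕ} {f : (Fin (2 * k + 1) → Bool) → Bool}

lemma f_update (hf : ∀ x, f x = decide (k + 1 ≤ (univ.filter (fun i => x i = true)).card))
    (x : Fin (2 * k + 1) → Bool) (j : Fin (2 * k + 1)) (b : Bool) :
    f (Function.update x j b) = decide (k + 1 ≤ co x j + b.toNat) := by
  rw [show f (Function.update x j b) = decide (k + 1 ≤ cnt (Function.update x j b)) from hf _,
    cnt_update]

lemma pivotal_imp (hf : ∀ x, f x = decide (k + 1 ≤ (univ.filter (fun i => x i = true)).card))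
    (x : Fin (2 * k + 1) → Bool) (j : Fin (2 * k + 1)) (h : piv f j x) :
    f x = x j := by
  unfold piv at h
  rw [f_update hf, f_update hf] at h
  simp only [Bool.toNat_true, Bool.toNat_false, add_zero, ne_eq, decide_eq_decide] at h
  have hco : co x j = k := by omega
  rw [show f x = decide (k + 1 ≤ cnt x) from hf _, cnt_split x j, hco]
  cases hxj : x j <;> simp

/-- the number of "good pairs" -/
def Np (f : (Fin (2*k+1) → Bool) → Bool) (S : Finset (Fin (2*k+1))) : ℕ :=
  ((univ ×ˢ univ).filter fun p : ((Fin (2*k+1) → Bool) × (Fin (2*k+1) → Bool)) =>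
    f p.2 = f p.1 ∧ ∀ i ∈ S, p.2 i = p.1 i).card

lemma step (hf : ∀ x, f x = decide (k + 1 ≤ (univ.filter (fun i => x i = true)).card))
    {S : Finset (Fin (2*k+1))} {j : Fin (2*k+1)} (hj : j ∉ S) :
    Np f S < 2 * Np f (insert j S) := by
  classical
  -- the special pivotal point
  obtain ⟨T, hTsub, hTcard⟩ : ∃ T ⊆ univ.erase j, T.card = k := by
    apply exists_subset_card_eq
    rw [card_erase_of_mem (mem_univ j), card_univ, Fintype.card_fin]
    omega
  set w : Fin (2*k+1) → Bool := fun i => decide (i ∈ T) with hw_def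
  have hw_co : co w j = k := by
    have : ((univ.erase j).filter fun i => w i = true) = T := by
      ext i
      simp only [mem_filter, mem_erase, mem_univ, and_true, true_and, hw_def,
        decide_eq_true_eq]
      constructor
      · rintro ⟨_, h⟩; exact h
      · intro h
        have := hTsub h
        rw [mem_erase] at this
        exact ⟨this.1, h⟩
    unfold co
    rw [this, hTcard]
  have hw_piv : piv f j w := by
    unfold piv
    rw [f_update hf, f_update hf, hw_co]
    simp only [Bool.toNat_true, Bool.toNat_false, add_zero, ne_eq, decide_eq_decide]
    omega
  -- the split
  set A := ((univ ×ˢ univ).filter fun p :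
      ((Fin (2*k+1) → Bool) × (Fin (2*k+1) → Bool)) =>
      (f p.2 = f p.1 ∧ ∀ i ∈ S, p.2 i = p.1 i) ∧ p.2 j = p.1 j) with hA_def
  set B := ((univ ×ˢ univ).filter fun p :
      ((Fin (2*k+1) → Bool) × (Fin (2*k+1) → Bool)) =>
      (f p.2 = f p.1 ∧ ∀ i ∈ S, p.2 i = p.1 i) ∧ ¬ (p.2 j = p.1 j)) with hB_def
  have hsplit : Np f S = A.card + B.card := by
    have key := card_filter_add_card_filter_not
      (s := (univ ×ˢ univ).filter fun p :
        ((Fin (2*k+1) → Bool) × (Fin (2*k+1) → Bool)) =>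
        f p.2 = f p.1 ∧ ∀ i ∈ S, p.2 i = p.1 i)
      (p := fun p => p.2 j = p.1 j)
    rw [filter_filter, filter_filter] at key
    exact key.symm
  have hAins : Np f (insert j S) = A.card := by
    unfold Np
    rw [hA_def]
    congr 1
    apply filter_congr
    intro p _
    simp only [forall_mem_insert]
    tauto
  have hwA : (w, w) ∈ A := by
    rw [hA_def, mem_filter]
    exact ⟨by simp [mem_product], ⟨rfl, fun i _ => rfl⟩, rfl⟩
  -- the injection
  set φ : ((Fin (2*k+1) → Bool) × (Fin (2*k+1) → Bool)) →
      ((Fin (2*k+1) → Bool) × (Fin (2*k+1) → Bool)) := fun p =>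
    if f (Function.update p.2 j (p.1 j)) = f p.1 then (p.1, Function.update p.2 j (p.1 j))
    else (Function.update p.1 j (p.2 j), p.2) with hφ_def
  have hBfacts : ∀ p ∈ B, f p.2 = f p.1 ∧ (∀ i ∈ S, p.2 i = p.1 i) ∧ p.2 j ≠ p.1 j := by
    intro p hp
    rw [hB_def, mem_filter] at hp
    tauto
  have hmaps : ∀ p ∈ B, φ p ∈ A.erase (w, w) := by
    intro p hp
    obtain ⟨hfp, hag, hne⟩ := hBfacts p hp
    rw [mem_erase]
    by_cases hc : f (Function.update p.2 j (p.1 j)) = f p.1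
    · have hφp : φ p = (p.1, Function.update p.2 j (p.1 j)) := if_pos hc
      rw [hφp]
      constructor
      · intro heq
        have h1 : p.1 = w := congrArg Prod.fst heq
        have h2 : Function.update p.2 j (p.1 j) = w := congrArg Prod.snd heq
        have hp2 : p.2 = Function.update w j (p.2 j) := by
          rw [← h2, Function.update_idem, Function.update_eq_self]
        have hnewj : p.2 j ≠ w j := by rw [← h1]; exact hne
        have hcon : f (Function.update w j (p.2 j)) = f (Function.update w j (w j)) := by
          rw [Function.update_eq_self, ← hp2, hfp, h1]
        have hall := notpiv_of f j w (p.2 j) (w j) hnewj hcon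
        exact hw_piv ((hall true).trans (hall false).symm)
      · rw [hA_def, mem_filter]
        refine ⟨by simp [mem_product], ⟨hc, fun i hi => ?_⟩, ?_⟩
        · show Function.update p.2 j (p.1 j) i = p.1 i
          rw [Function.update_of_ne (by rintro rfl; exact hj hi)]
          exact hag i hi
        · show Function.update p.2 j (p.1 j) j = p.1 j
          exact Function.update_self _ _ _
    · have hφp : φ p = (Function.update p.1 j (p.2 j), p.2) := if_neg hc
      rw [hφp]
      have hself : f (Function.update p.2 j (p.2 j)) = f p.2 := by
        rw [Function.update_eq_self]
      have hpivz : piv f j p.2 := by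
        apply piv_of f j p.2 (p.1 j) (p.2 j) (fun hh => hne hh.symm)
        intro hh
        exact hc (by rw [hh, hself, hfp])
      have hnpivx : ¬ piv f j p.1 := by
        intro hpx
        have h1 := pivotal_imp hf p.1 j hpx
        have h2 := pivotal_imp hf p.2 j hpivz
        exact hne ((h2.symm.trans hfp).trans h1)
      have heqx : f (Function.update p.1 j true) = f (Function.update p.1 j false) := by
        by_contra hcontra
        exact hnpivx hcontra
      have hfx' : f (Function.update p.1 j (p.2 j)) = f p.1 :=
        notpiv_of f j p.1 true false (by simp) heqx (p.2 j)
      constructor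
      · intro heq
        have h1 : Function.update p.1 j (p.2 j) = w := congrArg Prod.fst heq
        have h2 : p.2 = w := congrArg Prod.snd heq
        rw [h2] at hpivz
        have : piv f j p.1 := by
          rw [← piv_update f j p.1 (p.2 j), h1]
          exact hpivz
        exact hnpivx this
      · rw [hA_def, mem_filter]
        refine ⟨by simp [mem_product], ⟨by rw [hfx', hfp], fun i hi => ?_⟩, ?_⟩
        · show p.2 i = Function.update p.1 j (p.2 j) i
          rw [Function.update_of_ne (by rintro rfl; exact hj hi)]
          exact hag i hi
        · show p.2 j = Function.update p.1 j (p.2 j) j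
          exact (Function.update_self j (p.2 j) p.1).symm
  have bnot : ∀ a b : Bool, a ≠ b → a = !b := by decide
  have hinj : Set.InjOn φ B := by
    intro p hp q hq hpq
    obtain ⟨hfp, hagp, hnep⟩ := hBfacts p (by exact_mod_cast hp)
    obtain ⟨hfq, hagq, hneq⟩ := hBfacts q (by exact_mod_cast hq)
    by_cases cp : f (Function.update p.2 j (p.1 j)) = f p.1 <;>
      by_cases cq : f (Function.update q.2 j (q.1 j)) = f q.1
    · -- both then-branch
      have ep : φ p = (p.1, Function.update p.2 j (p.1 j)) := if_pos cp
      have eq' : φ q = (q.1, Function.update q.2 j (q.1 j)) := if_pos cq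
      rw [ep, eq', Prod.mk.injEq] at hpq
      obtain ⟨h1, h2⟩ := hpq
      have h3 : p.2 = q.2 := by
        funext i
        by_cases hij : i = j
        · subst hij
          rw [bnot _ _ hnep, bnot _ _ hneq, h1]
        · have := congrFun h2 i
          rwa [Function.update_of_ne hij, Function.update_of_ne hij] at this
      exact Prod.ext h1 h3
    · -- p then, q else : contradiction
      have ep : φ p = (p.1, Function.update p.2 j (p.1 j)) := if_pos cp
      have eq' : φ q = (Function.update q.1 j (q.2 j), q.2) := if_neg cq
      rw [ep, eq', Prod.mk.injEq] at hpq
      obtain ⟨h1, h2⟩ := hpq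
      have hselfq : f (Function.update q.2 j (q.2 j)) = f q.2 := by
        rw [Function.update_eq_self]
      have hpivq2 : piv f j q.2 :=
        piv_of f j q.2 (q.1 j) (q.2 j) (fun hh => hneq hh.symm)
          (fun hh => cq (by rw [hh, hselfq, hfq]))
      have hnotpivp2 : ∀ c, f (Function.update p.2 j c) = f p.2 :=
        notpiv_of f j p.2 (p.1 j) (p.2 j) (fun hh => hnep hh.symm)
          (by rw [Function.update_eq_self]; rw [cp, hfp])
      have hpivp2 : piv f j p.2 := by
        rw [← piv_update f j p.2 (p.1 j), h2]
        exact hpivq2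
      exact absurd ((hnotpivp2 true).trans (hnotpivp2 false).symm) hpivp2
    · -- p else, q then : contradiction (mirror)
      have ep : φ p = (Function.update p.1 j (p.2 j), p.2) := if_neg cp
      have eq' : φ q = (q.1, Function.update q.2 j (q.1 j)) := if_pos cq
      rw [ep, eq', Prod.mk.injEq] at hpq
      obtain ⟨h1, h2⟩ := hpq
      have hselfp : f (Function.update p.2 j (p.2 j)) = f p.2 := by
        rw [Function.update_eq_self]
      have hpivp2 : piv f j p.2 :=
        piv_of f j p.2 (p.1 j) (p.2 j) (fun hh => hnep hh.symm)
          (fun hh => cp (by rw [hh, hselfp, hfp]))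
      have hnotpivq2 : ∀ c, f (Function.update q.2 j c) = f q.2 :=
        notpiv_of f j q.2 (q.1 j) (q.2 j) (fun hh => hneq hh.symm)
          (by rw [Function.update_eq_self]; rw [cq, hfq])
      have hpivq2 : piv f j q.2 := by
        rw [← piv_update f j q.2 (q.1 j), ← h2]
        exact hpivp2
      exact absurd ((hnotpivq2 true).trans (hnotpivq2 false).symm) hpivq2
    · -- both else-branch
      have ep : φ p = (Function.update p.1 j (p.2 j), p.2) := if_neg cp
      have eq' : φ q = (Function.update q.1 j (q.2 j), q.2) := if_neg cq
      rw [ep, eq', Prod.mk.injEq] at hpq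
      obtain ⟨h1, h2⟩ := hpq
      have h3 : p.1 = q.1 := by
        funext i
        by_cases hij : i = j
        · subst hij
          rw [bnot _ _ (fun hh => hnep hh.symm), bnot _ _ (fun hh => hneq hh.symm), h2]
        · have := congrFun h1 i
          rwa [Function.update_of_ne hij, Function.update_of_ne hij] at this
      exact Prod.ext h3 h2
  have hcardB : B.card ≤ (A.erase (w, w)).card :=
    card_le_card_of_injOn φ hmaps hinj
  have hApos : 0 < A.card := card_pos.mpr ⟨(w, w), hwA⟩
  rw [hsplit, hAins]
  rw [card_erase_of_mem hwA] at hcardB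
  omega

lemma cnt_comp_perm (x : Fin (2*k+1) → Bool) (σ : Equiv.Perm (Fin (2*k+1))) :
    cnt (x ∘ σ) = cnt x := by
  classical
  unfold cnt
  have : (univ.filter fun i => (x ∘ σ) i = true)
      = (univ.filter fun i => x i = true).image σ.symm := by
    ext i
    simp only [mem_filter, mem_univ, true_and, mem_image, Function.comp_apply]
    constructor
    · intro h; exact ⟨σ i, h, σ.symm_apply_apply i⟩
    · rintro ⟨a, ha, rfl⟩; rwa [Equiv.apply_symm_apply]
  rw [this, card_image_of_injective _ σ.symm.injective]

lemma f_comp_perm (hf : ∀ x, f x = decide (k + 1 ≤ (univ.filter (fun i => x i = true)).card))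
    (x : Fin (2*k+1) → Bool) (σ : Equiv.Perm (Fin (2*k+1))) : f (x ∘ σ) = f x := by
  rw [show f (x ∘ σ) = decide (k + 1 ≤ cnt (x ∘ σ)) from hf _,
    show f x = decide (k + 1 ≤ cnt x) from hf _, cnt_comp_perm]

lemma Np_perm (hf : ∀ x, f x = decide (k + 1 ≤ (univ.filter (fun i => x i = true)).card))
    (σ : Equiv.Perm (Fin (2*k+1))) (S : Finset (Fin (2*k+1))) :
    Np f (S.image σ) = Np f S := by
  classical
  unfold Np
  refine Finset.card_bij' (fun p _ => (p.1 ∘ σ, p.2 ∘ σ))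
    (fun q _ => (q.1 ∘ σ.symm, q.2 ∘ σ.symm)) ?_ ?_ ?_ ?_
  · intro p hp
    rw [mem_filter] at hp ⊢
    obtain ⟨-, hfp, hag⟩ := hp
    refine ⟨by simp [mem_product], ?_, ?_⟩
    · rw [f_comp_perm hf, f_comp_perm hf]; exact hfp
    · intro i hi
      exact hag (σ i) (mem_image_of_mem σ hi)
  · intro q hq
    rw [mem_filter] at hq ⊢
    obtain ⟨-, hfq, hag⟩ := hq
    refine ⟨by simp [mem_product], ?_, ?_⟩
    · rw [f_comp_perm hf, f_comp_perm hf]; exact hfq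
    · intro i hi
      rw [mem_image] at hi
      obtain ⟨a, ha, rfl⟩ := hi
      simpa only [Function.comp_apply, Equiv.symm_apply_apply] using hag a ha
  · intro p hp
    refine Prod.ext ?_ ?_ <;> funext i <;>
      simp [Function.comp_apply, Equiv.symm_apply_apply]
  · intro q hq
    refine Prod.ext ?_ ?_ <;> funext i <;>
      simp [Function.comp_apply, Equiv.apply_symm_apply]

lemma Np_card_congr (hf : ∀ x, f x = decide (k + 1 ≤ (univ.filter (fun i => x i = true)).card))
    {S T : Finset (Fin (2*k+1))} (h : S.card = T.card) : Np f S = Np f T := by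
  classical
  have hc : Fintype.card {x : Fin (2*k+1) // ¬ x ∈ S} = Fintype.card {x : Fin (2*k+1) // ¬ x ∈ T} := by
    rw [Fintype.card_subtype_compl, Fintype.card_subtype_compl]
    congr 1
    have h1 : Fintype.card {x : Fin (2*k+1) // x ∈ S} = S.card := Fintype.card_coe S
    have h2 : Fintype.card {x : Fin (2*k+1) // x ∈ T} = T.card := Fintype.card_coe T
    rw [h1, h2, h]
  have e : {x : Fin (2*k+1) // x ∈ S} ≃ {x : Fin (2*k+1) // x ∈ T} := Finset.equivOfCardEq h
  have e' : {x : Fin (2*k+1) // ¬ x ∈ S} ≃ {x : Fin (2*k+1) // ¬ x ∈ T} :=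
    Fintype.equivOfCardEq hc
  set σ : Equiv.Perm (Fin (2*k+1)) := Equiv.subtypeCongr e e' with hσ
  have hmem : ∀ i ∈ S, σ i ∈ T := by
    intro i hi
    have : σ i = ↑(e ⟨i, hi⟩) := by
      simp [hσ, Equiv.subtypeCongr, Equiv.sumCompl_symm_apply_of_pos hi]
    rw [this]
    exact (e ⟨i, hi⟩).2
  have himg : S.image σ = T := by
    apply Finset.eq_of_subset_of_card_le
    · intro i hi
      rw [mem_image] at hi
      obtain ⟨a, ha, rfl⟩ := hi
      exact hmem a ha
    · rw [card_image_of_injective _ σ.injective, h]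
  rw [← himg, Np_perm hf]

lemma Np_chain (hf : ∀ x, f x = decide (k + 1 ≤ (univ.filter (fun i => x i = true)).card))
    (U : Finset (Fin (2*k+1))) :
    ∀ S : Finset (Fin (2*k+1)), Disjoint U S → U.Nonempty →
      Np f S < 2 ^ U.card * Np f (S ∪ U) := by
  classical
  induction U using Finset.induction_on with
  | empty => intro S _ hne; exact absurd rfl hne.ne_empty
  | @insert a U' ha ih =>
    intro S hdisj _
    have haS : a ∉ S := by
      have := Finset.disjoint_left.mp hdisj (mem_insert_self a U')
      exact this
    have hU'S : Disjoint U' S :=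
      Finset.disjoint_of_subset_left (subset_insert a U') hdisj
    have h1 : Np f S < 2 * Np f (insert a S) := step hf haS
    rcases U'.eq_empty_or_nonempty with rfl | hU'ne
    · have e1 : S ∪ insert a ∅ = insert a S := by
        ext i
        simp only [mem_union, mem_insert, notMem_empty, or_false, mem_insert]
        tauto
      rw [e1, show (insert a (∅ : Finset (Fin (2*k+1)))).card = 1 by simp, pow_one]
      exact h1
    · have hdisj2 : Disjoint U' (insert a S) := by
        rw [Finset.disjoint_insert_right]
        exact ⟨ha, hU'S⟩
      have h2 := ih (insert a S) hdisj2 hU'ne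
      have h2' : 2 * Np f (insert a S) ≤ 2 * (2 ^ U'.card * Np f (insert a S ∪ U')) :=
        Nat.mul_le_mul_left 2 (le_of_lt h2)
      have hunion : insert a S ∪ U' = S ∪ insert a U' := by
        rw [Finset.insert_union, Finset.union_insert]
      rw [card_insert_of_notMem ha, pow_succ]
      calc Np f S < 2 * Np f (insert a S) := h1
        _ ≤ 2 * (2 ^ U'.card * Np f (insert a S ∪ U')) := h2'
        _ = 2 ^ U'.card * 2 * Np f (S ∪ insert a U') := by rw [hunion]; ring

lemma Np_lt (hf : ∀ x, f x = decide (k + 1 ≤ (univ.filter (fun i => x i = true)).card))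
    {S T : Finset (Fin (2*k+1))} (hS : S.card ≤ k) (hT : T.card = k + 1) :
    Np f S < 2 ^ (k + 1 - S.card) * Np f T := by
  classical
  obtain ⟨S', hSS', hS'univ, hS'card⟩ :=
    Finset.exists_subsuperset_card_eq (n := k + 1) (Finset.subset_univ S) (by omega)
      (by rw [card_univ, Fintype.card_fin]; omega)
  have hUdisj : Disjoint (S' \ S) S := Finset.sdiff_disjoint
  have hUne : (S' \ S).Nonempty := by
    rw [← Finset.card_pos, card_sdiff_of_subset hSS']
    omega
  have hU := Np_chain hf (S' \ S) S hUdisj hUne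
  rw [Finset.union_sdiff_of_subset hSS', card_sdiff_of_subset hSS', hS'card] at hU
  rwa [Np_card_congr hf (hS'card.trans hT.symm)] at hU

lemma card_agree {n : ℕ} (x : Fin n → Bool) (S : Finset (Fin n)) :
    (univ.filter fun z : Fin n → Bool => ∀ i ∈ S, z i = x i).card = 2 ^ (n - S.card) := by
  classical
  have e : {z : Fin n → Bool // ∀ i ∈ S, z i = x i} ≃ ({i : Fin n // i ∉ S} → Bool) :=
    { toFun := fun z i => z.1 i.1
      invFun := fun y => ⟨fun i => if h : i ∈ S then x i else y ⟨i, h⟩,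
        fun i hi => dif_pos hi⟩
      left_inv := by
        intro z
        apply Subtype.ext
        funext i
        by_cases h : i ∈ S
        · simp [h, z.2 i h]
        · simp [h]
      right_inv := by
        intro y
        funext i
        simp [i.2] }
  have h1 : (univ.filter fun z : Fin n → Bool => ∀ i ∈ S, z i = x i).card
      = Fintype.card {z : Fin n → Bool // ∀ i ∈ S, z i = x i} :=
    (Fintype.card_subtype _).symm
  have h2 : Fintype.card {i : Fin n // i ∉ S} = n - S.card := by
    rw [Fintype.card_subtype_compl, Fintype.card_fin]
    congr 1
    exact Fintype.card_coe S
  rw [h1, Fintype.card_congr e, Fintype.card_fun, Fintype.card_bool, h2]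

lemma Np_eq_sum (f : (Fin (2*k+1) → Bool) → Bool) (S : Finset (Fin (2*k+1))) :
    Np f S = ∑ x : Fin (2*k+1) → Bool,
      (univ.filter fun z => f z = f x ∧ ∀ i ∈ S, z i = x i).card := by
  classical
  unfold Np
  rw [Finset.card_eq_sum_card_fiberwise (f := Prod.fst) (t := univ) (fun p _ => mem_univ _)]
  apply Finset.sum_congr rfl
  intro x _
  apply Finset.card_nbij' (i := fun p => p.2) (j := fun z => (x, z))
  · intro p hp
    rw [mem_coe, mem_filter] at hp
    rw [mem_coe, mem_filter]
    obtain ⟨hp1, hx⟩ := hp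
    rw [mem_filter] at hp1
    obtain ⟨-, hfp, hag⟩ := hp1
    subst hx
    exact ⟨mem_univ _, hfp, hag⟩
  · intro z hz
    rw [mem_coe, mem_filter] at hz
    obtain ⟨-, hfz, hag⟩ := hz
    rw [mem_coe, mem_filter, mem_filter]
    exact ⟨⟨by simp [mem_product], hfz, hag⟩, rfl⟩
  · intro p hp
    rw [mem_coe, mem_filter] at hp
    rw [← hp.2]
  · intro z _
    rfl

lemma Np_le (f : (Fin (2*k+1) → Bool) → Bool) (S : Finset (Fin (2*k+1))) :
    Np f S ≤ 2 ^ (2*k+1) * 2 ^ (2*k+1 - S.card) := by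
  classical
  rw [Np_eq_sum]
  calc ∑ x : Fin (2*k+1) → Bool,
        (univ.filter fun z => f z = f x ∧ ∀ i ∈ S, z i = x i).card
      ≤ ∑ x : Fin (2*k+1) → Bool,
        (univ.filter fun z : Fin (2*k+1) → Bool => ∀ i ∈ S, z i = x i).card := by
        apply Finset.sum_le_sum
        intro x _
        apply Finset.card_le_card
        apply Finset.monotone_filter_right
        intro z _ hz
        exact hz.2
    _ = ∑ _x : Fin (2*k+1) → Bool, 2 ^ (2*k+1 - S.card) := by
        apply Finset.sum_congr rfl
        intro x _
        exact card_agree x S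
    _ = 2 ^ (2*k+1) * 2 ^ (2*k+1 - S.card) := by
        rw [Finset.sum_const, card_univ, Fintype.card_fun, Fintype.card_bool,
          Fintype.card_fin, smul_eq_mul]

lemma vgSuff_eq {P : (Fin (2*k+1) → Bool) → ℝ} (hP : ∀ x, P x = 1 / 2 ^ (2*k+1))
    (S : Finset (Fin (2*k+1))) :
    vgSuff f P S = (Np f S : ℝ) / (2 ^ (2*k+1) * 2 ^ (2*k+1 - S.card)) := by
  classical
  have hPpos : ∀ x : Fin (2*k+1) → Bool, 0 < P x := fun x => by rw [hP]; positivity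
  have hu : (1 : ℝ) / 2 ^ (2*k+1) ≠ 0 := by positivity
  unfold vgSuff condPr
  rw [Finset.filter_true_of_mem (fun x _ => hPpos x)]
  simp only [hP, ← Finset.sum_filter, Finset.sum_const, nsmul_eq_mul, card_agree,
    mul_div_mul_right _ _ hu, ← Finset.mul_sum]
  rw [← Finset.sum_div, Np_eq_sum]
  push_cast
  rw [div_mul_div_comm, one_mul]

end Maj

end MajAux

open MajAux in
/-- for the majority function on `{0,1}^{2k+1}` under the uniform
distribution, there is a threshold `δ ∈ [0,1]` such that the subset-minimal
global `δ`-sufficient reasons are exactly the subsets of size `k+1`; in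
particular their number is the binomial coefficient `C(2k+1, k+1)`. -/
theorem majority_many_subset_minimal_reasons (k : ℕ)
    (f : (Fin (2 * k + 1) → Bool) → Bool)
    (hf : ∀ x, f x = decide (k + 1 ≤ (Finset.univ.filter (fun i => x i = true)).card))
    (P : (Fin (2 * k + 1) → Bool) → ℝ) (hP : ∀ x, P x = 1 / 2 ^ (2 * k + 1)) :
    ∃ δ : ℝ, 0 ≤ δ ∧ δ ≤ 1 ∧
      (∀ S : Finset (Fin (2 * k + 1)),
        SubsetMinimalSufficient f P δ S ↔ S.card = k + 1) ∧
      {S : Finset (Fin (2 * k + 1)) | SubsetMinimalSufficient f P δ S}.ncard =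
        Nat.choose (2 * k + 1) (k + 1) := by
  classical
  obtain ⟨T₀, -, hT₀⟩ := Finset.exists_subset_card_eq
    (s := (univ : Finset (Fin (2 * k + 1)))) (n := k + 1)
    (by rw [card_univ, Fintype.card_fin]; omega)
  set δ := vgSuff f P T₀ with hδ_def
  have hvS : ∀ S : Finset (Fin (2 * k + 1)),
      vgSuff f P S = (Np f S : ℝ) / (2 ^ (2 * k + 1) * 2 ^ (2 * k + 1 - S.card)) :=
    vgSuff_eq hP
  have hveq : ∀ S T : Finset (Fin (2 * k + 1)), S.card = T.card →
      vgSuff f P S = vgSuff f P T := by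
    intro S T h
    rw [hvS, hvS, Np_card_congr hf h, h]
  have hvlt : ∀ S T : Finset (Fin (2 * k + 1)), S.card ≤ k → T.card = k + 1 →
      vgSuff f P S < vgSuff f P T := by
    intro S T hS hT
    rw [hvS, hvS]
    rw [div_lt_div_iff₀ (by positivity) (by positivity)]
    have hnat : Np f S * 2 ^ (2 * k + 1 - T.card) < Np f T * 2 ^ (2 * k + 1 - S.card) := by
      rw [hT]
      have h2 : 2 * k + 1 - (k + 1) = k := by omega
      have h3 : 2 * k + 1 - S.card = (k + 1 - S.card) + k := by omega
      rw [h2, h3, pow_add]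
      have hlt := Np_lt hf hS hT
      calc Np f S * 2 ^ k < (2 ^ (k + 1 - S.card) * Np f T) * 2 ^ k := by
            exact (Nat.mul_lt_mul_right (Nat.pow_pos (by norm_num) : 0 < 2 ^ k)).mpr hlt
        _ = Np f T * (2 ^ (k + 1 - S.card) * 2 ^ k) := by ring
    have hcast : (Np f S : ℝ) * 2 ^ (2 * k + 1 - T.card)
        < (Np f T : ℝ) * 2 ^ (2 * k + 1 - S.card) := by
      exact_mod_cast hnat
    calc (Np f S : ℝ) * (2 ^ (2 * k + 1) * 2 ^ (2 * k + 1 - T.card))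
        = 2 ^ (2 * k + 1) * ((Np f S : ℝ) * 2 ^ (2 * k + 1 - T.card)) := by ring
      _ < 2 ^ (2 * k + 1) * ((Np f T : ℝ) * 2 ^ (2 * k + 1 - S.card)) := by
          exact mul_lt_mul_of_pos_left hcast (by positivity)
      _ = (Np f T : ℝ) * (2 ^ (2 * k + 1) * 2 ^ (2 * k + 1 - S.card)) := by ring
  have hδ0 : 0 ≤ δ := by
    rw [hδ_def, hvS]
    positivity
  have hδ1 : δ ≤ 1 := by
    rw [hδ_def, hvS]
    rw [div_le_one (by positivity)]
    have := Np_le f T₀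
    calc (Np f T₀ : ℝ) ≤ ((2 ^ (2 * k + 1) * 2 ^ (2 * k + 1 - T₀.card) : ℕ) : ℝ) := by
          exact_mod_cast this
      _ = 2 ^ (2 * k + 1) * 2 ^ (2 * k + 1 - T₀.card) := by push_cast; ring
  have hiff : ∀ S : Finset (Fin (2 * k + 1)),
      SubsetMinimalSufficient f P δ S ↔ S.card = k + 1 := by
    intro S
    constructor
    · rintro ⟨h1, h2⟩
      by_contra hSc
      rcases lt_or_gt_of_ne hSc with hlt | hgt
      · exact absurd h1 (not_le.mpr (hvlt S T₀ (by omega) hT₀))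
      · obtain ⟨S', hS'sub, hS'card⟩ :=
          Finset.exists_subset_card_eq (show k + 1 ≤ S.card by omega)
        have hss : S' ⊂ S := by
          rw [Finset.ssubset_iff_subset_ne]
          refine ⟨hS'sub, ?_⟩
          intro h
          rw [h] at hS'card
          omega
        have hlt2 := h2 S' hss
        rw [hveq S' T₀ (hS'card.trans hT₀.symm)] at hlt2
        exact lt_irrefl δ hlt2
    · intro hS
      refine ⟨le_of_eq (hveq T₀ S (hT₀.trans hS.symm)), ?_⟩
      intro S' hss
      have hcard : S'.card ≤ k := by
        have := Finset.card_lt_card hss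
        omega
      exact hvlt S' T₀ hcard hT₀
  refine ⟨δ, hδ0, hδ1, hiff, ?_⟩
  have hset : {S : Finset (Fin (2 * k + 1)) | SubsetMinimalSufficient f P δ S}
      = ↑(Finset.powersetCard (k + 1) (univ : Finset (Fin (2 * k + 1)))) := by
    ext S
    simp only [Set.mem_setOf_eq, mem_coe, Finset.mem_powersetCard]
    rw [hiff S]
    constructor
    · intro h
      exact ⟨subset_univ S, h⟩
    · rintro ⟨-, h⟩
      exact h
  rw [hset, Set.ncard_coe_finset, Finset.card_powersetCard, card_univ, Fintype.card_fin]
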